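/- arXiv:2411.03163 — 4 statements merged into one kernel-verified Lean document; each statement's English description precedes it below -/
import Mathlib

section
/- Let H = S⁻ᵀDS⁻¹ be a Hamiltonian matrix with symplectic diagonalization (S symplectic, D = diag(d₁,d₁,…,d_m,d_m), all d_i > 0, d_min and d_max the smallest and largest d_i) and let V := (1/2)·S·diag(coth d₁, coth d₁,…, coth d_m, coth d_m)·Sᵀ be its covariance matrix. Then for every real t ≥ 0, ‖2iΩV + ((t−1)/(t+1))·I‖∞ ≤ ‖S‖∞² · 2/(1 − e^{−2 d_min}). -/
open Matrix

/-- The spectral norm (ℓ²→ℓ² operator norm, largest singular value) of a matrix. -/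
noncomputable def spNorm {𝕜 : Type*} [RCLike 𝕜] {p q : Type*} [Fintype p] [Fintype q]
    [DecidableEq q] (A : Matrix p q 𝕜) : ℝ :=
  ‖LinearMap.toContinuousLinearMap (Matrix.toEuclideanLin A)‖

/-- Index set for `2m × 2m` matrices: the pair `(i, δ)` stands for the index `2i - δ`,
`(i, 0)` being the first index of the `i`-th pair and `(i, 1)` the second. -/
abbrev Idx (m : ℕ) := Fin m × Fin 2

/-- The standard symplectic form: block diagonal with `m` blocks `[[0,1],[-1,0]]`. -/
def Omega (m : ℕ) : Matrix (Idx m) (Idx m) ℝ :=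
  Matrix.of fun p q =>
    if p.1 = q.1 ∧ p.2 = 0 ∧ q.2 = 1 then 1
    else if p.1 = q.1 ∧ p.2 = 1 ∧ q.2 = 0 then -1 else 0

/-- The diagonal matrix `diag (d₁, d₁, …, d_m, d_m)`. -/
def pairDiag {m : ℕ} (d : Fin m → ℝ) : Matrix (Idx m) (Idx m) ℝ :=
  Matrix.diagonal fun p => d p.1

/-- Hyperbolic cotangent. -/
noncomputable def rcoth (x : ℝ) : ℝ := Real.cosh x / Real.sinh x

/-- A real matrix regarded as a complex matrix. -/
def cplx {p q : Type*} (A : Matrix p q ℝ) : Matrix p q ℂ :=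
  A.map (fun x => (x : ℂ))

open scoped Matrix.Norms.L2Operator

section Aux

lemma spNorm_eq_norm {𝕜 : Type*} [RCLike 𝕜] {p q : Type*} [Fintype p] [Fintype q]
    [DecidableEq q] (A : Matrix p q 𝕜) : spNorm A = ‖A‖ := rfl

lemma aux_l2_opNorm_le_of {𝕜 : Type*} [RCLike 𝕜] {p q : Type*} [Fintype p] [Fintype q]
    [DecidableEq q] (A : Matrix p q 𝕜) (c : ℝ) (hc : 0 ≤ c)
    (h : ∀ x : q → 𝕜, ∑ i, ‖A.mulVec x i‖ ^ 2 ≤ c ^ 2 * ∑ i, ‖x i‖ ^ 2) :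
    ‖A‖ ≤ c := by
  rw [Matrix.l2_opNorm_def]
  apply ContinuousLinearMap.opNorm_le_bound _ hc
  intro x
  rw [EuclideanSpace.norm_eq, EuclideanSpace.norm_eq]
  have h2 : ∀ i, ((LinearMap.toContinuousLinearMap (Matrix.toEuclideanLin A)) x : p → 𝕜) i
      = A.mulVec x i := fun _ => rfl
  calc Real.sqrt (∑ i, ‖(LinearMap.toContinuousLinearMap (Matrix.toEuclideanLin A)) x i‖^2)
      ≤ Real.sqrt (c^2 * ∑ i, ‖(x : q → 𝕜) i‖^2) := by
        apply Real.sqrt_le_sqrt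
        simp only [h2]
        exact h x
    _ = c * Real.sqrt (∑ i, ‖(x : q → 𝕜) i‖^2) := by
        rw [Real.sqrt_mul (by positivity), Real.sqrt_sq hc]

lemma aux_l2_opNorm_mulVec_sq {𝕜 : Type*} [RCLike 𝕜] {p q : Type*} [Fintype p] [Fintype q]
    [DecidableEq q] (A : Matrix p q 𝕜) (x : q → 𝕜) :
    ∑ i, ‖A.mulVec x i‖ ^ 2 ≤ ‖A‖^2 * ∑ i, ‖x i‖ ^ 2 := by
  have := Matrix.l2_opNorm_mulVec A ((WithLp.equiv 2 _).symm x)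
  rw [EuclideanSpace.norm_eq, EuclideanSpace.norm_eq] at this
  have h2 : ∀ i, ((EuclideanSpace.equiv p 𝕜).symm (A *ᵥ (WithLp.equiv 2 _).symm x)) i
      = A.mulVec x i := fun _ => rfl
  simp only [h2] at this
  have h3 : ∀ i, ((WithLp.equiv 2 (q → 𝕜)).symm x : q → 𝕜) i = x i := fun _ => rfl
  simp only [h3] at this
  have hA : (0:ℝ) ≤ ‖A‖ := norm_nonneg _
  have l1 : (0:ℝ) ≤ ∑ i, ‖A.mulVec x i‖ ^ 2 := by positivity
  have l2 : (0:ℝ) ≤ ∑ i, ‖x i‖ ^ 2 := by positivity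
  nlinarith [Real.sq_sqrt l1, Real.sq_sqrt l2, Real.sqrt_nonneg (∑ i, ‖A.mulVec x i‖ ^ 2),
    Real.sqrt_nonneg (∑ i, ‖x i‖ ^ 2), this]

lemma cplx_norm_le {p q : Type*} [Fintype p] [Fintype q] [DecidableEq q]
    (A : Matrix p q ℝ) : ‖cplx A‖ ≤ ‖A‖ := by
  apply aux_l2_opNorm_le_of _ _ (norm_nonneg A)
  intro x
  have hre := aux_l2_opNorm_mulVec_sq A (fun j => (x j).re)
  have him := aux_l2_opNorm_mulVec_sq A (fun j => (x j).im)
  have key : ∀ i, ‖(cplx A).mulVec x i‖^2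
      = ‖A.mulVec (fun j => (x j).re) i‖^2 + ‖A.mulVec (fun j => (x j).im) i‖^2 := by
    intro i
    have h1 : ((cplx A).mulVec x i).re = A.mulVec (fun j => (x j).re) i := by
      simp [Matrix.mulVec, dotProduct, cplx, Complex.mul_re]
    have h2 : ((cplx A).mulVec x i).im = A.mulVec (fun j => (x j).im) i := by
      simp [Matrix.mulVec, dotProduct, cplx, Complex.mul_im]
    rw [← h1, ← h2]
    rw [Complex.sq_norm, Complex.normSq_apply]
    simp [Real.norm_eq_abs, sq_abs]
    ring
  have keyx : ∀ i, ‖x i‖^2 = ‖(x i).re‖^2 + ‖(x i).im‖^2 := by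
    intro i
    rw [Complex.sq_norm, Complex.normSq_apply]
    simp [Real.norm_eq_abs, sq_abs]
    ring
  simp only [key, keyx, Finset.sum_add_distrib, mul_add]
  exact add_le_add hre him

lemma real_transpose_norm {n : Type*} [Fintype n] [DecidableEq n] (A : Matrix n n ℝ) :
    ‖Aᵀ‖ = ‖A‖ := by
  have : Aᴴ = Aᵀ := by ext i j; simp [Matrix.conjTranspose_apply]
  rw [← this, Matrix.l2_opNorm_conjTranspose A]

lemma Omega_transpose (m : ℕ) : (Omega m)ᵀ = - Omega m := by
  ext ⟨i, δ⟩ ⟨j, ε⟩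
  fin_cases δ <;> fin_cases ε <;>
    simp [Omega, Matrix.transpose_apply, eq_comm] <;> split <;> simp_all

lemma Omega_mul_Omega (m : ℕ) : Omega m * Omega m = -1 := by
  ext ⟨i, δ⟩ ⟨j, ε⟩
  rw [Matrix.mul_apply, Fintype.sum_prod_type]
  simp only [Fin.sum_univ_two]
  fin_cases δ <;> fin_cases ε <;>
    simp [Omega, Matrix.one_apply, Finset.sum_ite_eq, Prod.ext_iff, eq_comm] <;>
    split <;> simp_all

/-- `N' := i • (Ω C) + c • 1` for `C = pairDiag f`. -/
noncomputable def Np {m : ℕ} (f : Fin m → ℝ) (c : ℝ) : Matrix (Idx m) (Idx m) ℂ :=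
  Complex.I • cplx (Omega m * pairDiag f) + (c : ℂ) • 1

lemma Np_mulVec_zero {m : ℕ} (f : Fin m → ℝ) (c : ℝ) (x : Idx m → ℂ) (i : Fin m) :
    (Np f c).mulVec x (i, 0) = c * x (i, 0) + Complex.I * (f i) * x (i, 1) := by
  rw [Matrix.mulVec, dotProduct, Fintype.sum_prod_type]
  simp only [Fin.sum_univ_two, Np, cplx, Omega, pairDiag, Matrix.add_apply, Matrix.smul_apply,
    Matrix.map_apply, Matrix.mul_diagonal, Matrix.one_apply, Matrix.of_apply, Prod.mk.injEq]
  simp [Finset.sum_add_distrib, apply_ite (fun r : ℝ => (r : ℂ)), mul_ite, ite_mul,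
    Finset.sum_ite_eq, Finset.sum_ite_eq', eq_comm, Prod.ext_iff]

lemma Np_mulVec_one {m : ℕ} (f : Fin m → ℝ) (c : ℝ) (x : Idx m → ℂ) (i : Fin m) :
    (Np f c).mulVec x (i, 1) = c * x (i, 1) - Complex.I * (f i) * x (i, 0) := by
  rw [Matrix.mulVec, dotProduct, Fintype.sum_prod_type]
  simp only [Fin.sum_univ_two, Np, cplx, Omega, pairDiag, Matrix.add_apply, Matrix.smul_apply,
    Matrix.map_apply, Matrix.mul_diagonal, Matrix.one_apply, Matrix.of_apply, Prod.mk.injEq]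
  simp [Finset.sum_add_distrib, apply_ite (fun r : ℝ => (r : ℂ)), mul_ite, ite_mul,
    Finset.sum_ite_eq, Finset.sum_ite_eq', eq_comm, Prod.ext_iff]
  ring

lemma Np_norm_le {m : ℕ} (f : Fin m → ℝ) (c : ℝ) (F : ℝ) (hF : 0 < F)
    (hf : ∀ i, 0 ≤ f i ∧ f i ≤ F) (hc : |c| ≤ 1) :
    ‖Np f c‖ ≤ 1 + F := by
  apply aux_l2_opNorm_le_of _ _ (by linarith)
  intro x
  rw [Fintype.sum_prod_type, Fintype.sum_prod_type, Finset.mul_sum]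
  simp only [Fin.sum_univ_two]
  apply Finset.sum_le_sum
  intro i _
  rw [Np_mulVec_zero, Np_mulVec_one]
  have hfi := hf i
  have h0 : ‖(c : ℂ) * x (i,0) + Complex.I * (f i) * x (i,1)‖
      ≤ |c| * ‖x (i,0)‖ + f i * ‖x (i,1)‖ := by
    calc ‖(c : ℂ) * x (i,0) + Complex.I * (f i) * x (i,1)‖
        ≤ ‖(c : ℂ) * x (i,0)‖ + ‖Complex.I * (f i) * x (i,1)‖ := norm_add_le _ _
      _ = |c| * ‖x (i,0)‖ + f i * ‖x (i,1)‖ := by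
          simp [norm_mul, Complex.norm_real, Real.norm_eq_abs, abs_of_nonneg hfi.1]
  have h1 : ‖(c : ℂ) * x (i,1) - Complex.I * (f i) * x (i,0)‖
      ≤ |c| * ‖x (i,1)‖ + f i * ‖x (i,0)‖ := by
    calc ‖(c : ℂ) * x (i,1) - Complex.I * (f i) * x (i,0)‖
        ≤ ‖(c : ℂ) * x (i,1)‖ + ‖Complex.I * (f i) * x (i,0)‖ := norm_sub_le _ _
      _ = |c| * ‖x (i,1)‖ + f i * ‖x (i,0)‖ := by
          simp [norm_mul, Complex.norm_real, Real.norm_eq_abs, abs_of_nonneg hfi.1]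
  have ha : (0:ℝ) ≤ ‖x (i,0)‖ := norm_nonneg _
  have hb : (0:ℝ) ≤ ‖x (i,1)‖ := norm_nonneg _
  have hcn : (0:ℝ) ≤ |c| := abs_nonneg c
  have s1 : |c| * ‖x (i,0)‖ + f i * ‖x (i,1)‖ ≤ ‖x (i,0)‖ + F * ‖x (i,1)‖ := by
    nlinarith [hfi.1, hfi.2]
  have s2 : |c| * ‖x (i,1)‖ + f i * ‖x (i,0)‖ ≤ ‖x (i,1)‖ + F * ‖x (i,0)‖ := by
    nlinarith [hfi.1, hfi.2]
  have hu2 := pow_le_pow_left₀ (norm_nonneg _) (h0.trans s1) 2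
  have hv2 := pow_le_pow_left₀ (norm_nonneg _) (h1.trans s2) 2
  nlinarith [hu2, hv2, sq_nonneg (‖x (i,0)‖ - ‖x (i,1)‖), hF, mul_nonneg ha hb]

lemma cplx_mul {n : Type*} [Fintype n] (A B : Matrix n n ℝ) :
    cplx (A * B) = cplx A * cplx B := by
  ext i j
  simp [cplx, Matrix.mul_apply]

lemma cplx_one {n : Type*} [Fintype n] [DecidableEq n] :
    cplx (1 : Matrix n n ℝ) = 1 := by
  ext i j
  simp [cplx, Matrix.one_apply, apply_ite (fun r : ℝ => (r : ℂ))]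

lemma cplx_smul {p q : Type*} (r : ℝ) (A : Matrix p q ℝ) :
    cplx (r • A) = (r : ℂ) • cplx A := by
  ext i j
  simp [cplx]

lemma rcoth_pos {x : ℝ} (hx : 0 < x) : 0 < rcoth x :=
  div_pos (Real.cosh_pos x) (Real.sinh_pos_iff.mpr hx)

lemma rcoth_antitone {a b : ℝ} (ha : 0 < a) (hab : a ≤ b) : rcoth b ≤ rcoth a := by
  have hb : 0 < b := lt_of_lt_of_le ha hab
  unfold rcoth
  rw [div_le_div_iff₀ (Real.sinh_pos_iff.mpr hb) (Real.sinh_pos_iff.mpr ha)]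
  have hs := Real.sinh_sub b a
  have hnn : 0 ≤ Real.sinh (b - a) := Real.sinh_nonneg_iff.mpr (by linarith)
  nlinarith [hs, hnn]

end Aux

/-- For a Gaussian Hamiltonian `H = S⁻ᵀ D S⁻¹` with symplectic
diagonalization and covariance matrix `V = (1/2) S coth(D) Sᵀ`, for every `t ≥ 0`,
`‖2iΩV + ((t-1)/(t+1))·I‖∞ ≤ ‖S‖∞² · 2/(1 - e^{-2 d_min})`. -/
theorem statement0 {m : ℕ} (hm : 0 < m)
    (S : Matrix (Idx m) (Idx m) ℝ) (hS : S * Omega m * Sᵀ = Omega m)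
    (d : Fin m → ℝ) (hd : ∀ i, 0 < d i)
    (dmin dmax : ℝ)
    (hdmin_le : ∀ i, dmin ≤ d i) (hdmin_mem : ∃ i, d i = dmin)
    (hdmax_le : ∀ i, d i ≤ dmax) (hdmax_mem : ∃ i, d i = dmax)
    (H : Matrix (Idx m) (Idx m) ℝ) (hH : H = (S⁻¹)ᵀ * pairDiag d * S⁻¹)
    (V : Matrix (Idx m) (Idx m) ℝ)
    (hV : V = (1/2 : ℝ) • (S * pairDiag (fun i => rcoth (d i)) * Sᵀ))
    (t : ℝ) (ht : 0 ≤ t) :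
    spNorm ((2 * Complex.I) • (cplx (Omega m) * cplx V) + (((t - 1)/(t + 1) : ℝ) : ℂ) • 1)
      ≤ spNorm S ^ 2 * (2 / (1 - Real.exp (-2 * dmin))) := by
  haveI : Nonempty (Fin m) := ⟨⟨0, hm⟩⟩
  -- basic symplectic algebra
  set Ω := Omega m with hΩ
  have hΩΩ : Ω * Ω = -1 := Omega_mul_Omega m
  have hΩT : Ωᵀ = -Ω := Omega_transpose m
  have hright : S * (-(Ω * Sᵀ * Ω)) = 1 := by
    have : S * (Ω * Sᵀ * Ω) = (S * Ω * Sᵀ) * Ω := by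
      rw [Matrix.mul_assoc, Matrix.mul_assoc, Matrix.mul_assoc]
    rw [Matrix.mul_neg, this, hS, hΩΩ]
    simp
  have hSinv : S⁻¹ = -(Ω * Sᵀ * Ω) := Matrix.inv_eq_right_inv hright
  have hSS : S * S⁻¹ = 1 := by rw [hSinv]; exact hright
  have hkey : (S⁻¹)ᵀ * Ω = Ω * S := by
    have expand : (S⁻¹)ᵀ * Ω = -(Ω * (S * (Ω * Ω))) := by
      rw [hSinv, Matrix.transpose_neg, Matrix.transpose_mul, Matrix.transpose_mul, hΩT,
        Matrix.transpose_transpose]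
      simp only [Matrix.transpose_transpose, Matrix.neg_mul, Matrix.mul_neg, neg_neg,
        Matrix.mul_assoc]
    rw [expand, hΩΩ]
    simp only [Matrix.mul_neg, Matrix.mul_one, neg_neg]
  -- the sandwich decomposition
  set c : ℝ := (t - 1) / (t + 1) with hc
  set f : Fin m → ℝ := fun i => rcoth (d i) with hfdef
  have hPQ : cplx ((S⁻¹)ᵀ) * cplx (Sᵀ) = 1 := by
    rw [← cplx_mul, ← Matrix.transpose_mul, hSS]
    simp [Matrix.transpose_one, cplx_one]
  have hsand :
      (2 * Complex.I) • (cplx Ω * cplx V) + ((c : ℝ) : ℂ) • 1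
        = cplx ((S⁻¹)ᵀ) * Np f c * cplx (Sᵀ) := by
    have hreal : Ω * (S * pairDiag f * Sᵀ) = (S⁻¹)ᵀ * (Ω * pairDiag f) * Sᵀ := by
      calc Ω * (S * pairDiag f * Sᵀ) = (Ω * S) * pairDiag f * Sᵀ := by
            rw [← Matrix.mul_assoc, ← Matrix.mul_assoc]
        _ = ((S⁻¹)ᵀ * Ω) * pairDiag f * Sᵀ := by rw [hkey]
        _ = (S⁻¹)ᵀ * (Ω * pairDiag f) * Sᵀ := by rw [Matrix.mul_assoc ((S⁻¹)ᵀ)]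
    have hcV : cplx V = ((1/2 : ℝ) : ℂ) • cplx (S * pairDiag f * Sᵀ) := by
      rw [hV, cplx_smul]
    rw [Np, Matrix.mul_add, Matrix.add_mul]
    congr 1
    · rw [hcV, Matrix.mul_smul, smul_smul, ← cplx_mul, hreal, cplx_mul, cplx_mul]
      rw [Matrix.mul_assoc]
      rw [show (2 * Complex.I) * ((1/2 : ℝ) : ℂ) = Complex.I by push_cast; ring]
      simp only [Matrix.mul_smul, Matrix.smul_mul, ← hΩ, Matrix.mul_assoc]
    · have : cplx ((S⁻¹)ᵀ) * (((c : ℝ) : ℂ) • 1) * cplx (Sᵀ)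
          = ((c : ℝ) : ℂ) • (cplx ((S⁻¹)ᵀ) * 1 * cplx (Sᵀ)) := by
        simp only [Matrix.mul_smul, Matrix.smul_mul]
      rw [this, Matrix.mul_one, hPQ]
  -- norms
  rw [spNorm_eq_norm, spNorm_eq_norm, hsand]
  obtain ⟨i0, hi0⟩ := hdmin_mem
  have hdmin_pos : 0 < dmin := hi0 ▸ hd i0
  set F : ℝ := rcoth dmin with hFdef
  have hF : 0 < F := rcoth_pos hdmin_pos
  have hf : ∀ i, 0 ≤ f i ∧ f i ≤ F := by
    intro i
    exact ⟨le_of_lt (rcoth_pos (hd i)), rcoth_antitone hdmin_pos (hdmin_le i)⟩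
  have hcabs : |c| ≤ 1 := by
    rw [hc, abs_div, abs_of_pos (by linarith : (0:ℝ) < t + 1),
      div_le_one (by linarith : (0:ℝ) < t + 1)]
    rw [abs_le]; constructor <;> linarith
  have hNp : ‖Np f c‖ ≤ 1 + F := Np_norm_le f c F hF hf hcabs
  -- norm of Ω
  have hOone : ‖(1 : Matrix (Idx m) (Idx m) ℝ)‖ = 1 := by
    simp [Matrix.l2_opNorm_def]
  have hΩTΩ : Ωᵀ * Ω = 1 := by
    rw [hΩT, Matrix.neg_mul, hΩΩ]; simp
  have hΩnorm : ‖Ω‖ ≤ 1 := by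
    have h1 : ‖Ωᴴ * Ω‖ = ‖Ω‖ * ‖Ω‖ := Matrix.l2_opNorm_conjTranspose_mul_self Ω
    have h2 : Ωᴴ = Ωᵀ := by ext i j; simp [Matrix.conjTranspose_apply]
    rw [h2, hΩTΩ, hOone] at h1
    nlinarith [norm_nonneg Ω]
  -- norm of S⁻¹
  have hSinv_norm : ‖S⁻¹‖ ≤ ‖S‖ := by
    rw [hSinv, norm_neg]
    calc ‖Ω * Sᵀ * Ω‖ ≤ ‖Ω * Sᵀ‖ * ‖Ω‖ := Matrix.l2_opNorm_mul _ _
      _ ≤ ‖Ω‖ * ‖Sᵀ‖ * ‖Ω‖ := by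
          have := Matrix.l2_opNorm_mul Ω Sᵀ
          nlinarith [norm_nonneg Ω, norm_nonneg (Ω * Sᵀ)]
      _ ≤ 1 * ‖Sᵀ‖ * 1 := by
          have h1 : (0:ℝ) ≤ ‖Sᵀ‖ := norm_nonneg _
          apply mul_le_mul _ hΩnorm (norm_nonneg _) (by positivity)
          exact mul_le_mul hΩnorm le_rfl h1 zero_le_one
      _ = ‖S‖ := by rw [real_transpose_norm]; ring
  have hP : ‖cplx ((S⁻¹)ᵀ)‖ ≤ ‖S‖ := by
    calc ‖cplx ((S⁻¹)ᵀ)‖ ≤ ‖(S⁻¹)ᵀ‖ := cplx_norm_le _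
      _ = ‖S⁻¹‖ := real_transpose_norm _
      _ ≤ ‖S‖ := hSinv_norm
  have hQ : ‖cplx (Sᵀ)‖ ≤ ‖S‖ := by
    calc ‖cplx (Sᵀ)‖ ≤ ‖Sᵀ‖ := cplx_norm_le _
      _ = ‖S‖ := real_transpose_norm _
  -- final arithmetic : 1 + F = 2 / (1 - exp (-2 dmin))
  have hsinh : 0 < Real.sinh dmin := Real.sinh_pos_iff.mpr hdmin_pos
  have e1 : Real.exp (-(2 * dmin)) * Real.exp dmin = Real.exp (-dmin) := by
    rw [← Real.exp_add]; congr 1; ring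
  have hexp2 : 1 - Real.exp (-2 * dmin) = 2 * Real.sinh dmin / Real.exp dmin := by
    rw [Real.sinh_eq]
    field_simp [Real.exp_ne_zero]
    linear_combination -e1
  have hFval : 1 + F = 2 / (1 - Real.exp (-2 * dmin)) := by
    have h2 : 2 / (2 * Real.sinh dmin / Real.exp dmin) = Real.exp dmin / Real.sinh dmin := by
      rw [div_div_eq_mul_div]
      rw [show (2 : ℝ) * Real.exp dmin / (2 * Real.sinh dmin)
          = Real.exp dmin / Real.sinh dmin by
        rw [mul_div_mul_left _ _ (two_ne_zero)]]
    rw [hexp2, h2, hFdef, rcoth]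
    field_simp
    rw [Real.sinh_add_cosh]
  -- combine
  have hmain : ‖cplx ((S⁻¹)ᵀ) * Np f c * cplx (Sᵀ)‖ ≤ ‖S‖ * (1 + F) * ‖S‖ := by
    calc ‖cplx ((S⁻¹)ᵀ) * Np f c * cplx (Sᵀ)‖
        ≤ ‖cplx ((S⁻¹)ᵀ) * Np f c‖ * ‖cplx (Sᵀ)‖ := Matrix.l2_opNorm_mul _ _
      _ ≤ ‖cplx ((S⁻¹)ᵀ)‖ * ‖Np f c‖ * ‖cplx (Sᵀ)‖ :=
          mul_le_mul_of_nonneg_right (Matrix.l2_opNorm_mul _ _) (norm_nonneg _)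
      _ ≤ ‖S‖ * (1 + F) * ‖S‖ := by
          apply mul_le_mul _ hQ (norm_nonneg _) (by positivity)
          exact mul_le_mul hP hNp (norm_nonneg _) (norm_nonneg _)
  calc ‖cplx ((S⁻¹)ᵀ) * Np f c * cplx (Sᵀ)‖ ≤ ‖S‖ * (1 + F) * ‖S‖ := hmain
    _ = ‖S‖ ^ 2 * (2 / (1 - Real.exp (-2 * dmin))) := by rw [← hFval]; ring
end

section
/- Let M be an (m₁+m₂)×(m₁+m₂) positive definite Hermitian complex matrix written in block form M = [[A,B],[C,D]] with A of size m₁×m₁ and D of size m₂×m₂ (so that D and the Schur complement A − BD⁻¹C are invertible). Let N be the upper-left m₁×m₁ block of M⁻¹, so N = (A − BD⁻¹C)⁻¹, and let B̃ be obtained from B by replacing its first row with zeros. Then for every j ∈ {1,…,m₁}: |(N⁻¹)_{1,j} − A_{1,j}| ≤ ‖B − B̃‖∞ · ‖M⁻¹‖∞ · ‖M‖∞ and |(N⁻¹)_{j,1} − A_{j,1}| ≤ ‖B − B̃‖∞ · ‖M⁻¹‖∞ · ‖M‖∞. -/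
open Matrix
open scoped ComplexOrder

section helpers

open scoped Matrix.Norms.L2Operator

set_option linter.unusedSectionVars false

variable {ι κ : Type*} [Fintype ι] [Fintype κ] [DecidableEq ι] [DecidableEq κ]

lemma spNorm_eq_l2_opNorm (X : Matrix ι κ ℂ) : spNorm X = ‖X‖ := rfl

lemma h1_coord (v : ι → ℂ) (i : ι) :
    ‖v i‖ ≤ ‖((WithLp.equiv 2 (ι → ℂ)).symm v : EuclideanSpace ℂ ι)‖ := by
  rw [EuclideanSpace.norm_eq]
  rw [show ‖v i‖ = Real.sqrt (‖v i‖^2) by rw [Real.sqrt_sq (norm_nonneg _)]]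
  apply Real.sqrt_le_sqrt
  have : ∀ j ∈ Finset.univ, (0:ℝ) ≤ ‖((WithLp.equiv 2 (ι → ℂ)).symm v : EuclideanSpace ℂ ι) j‖^2 :=
    fun j _ => sq_nonneg _
  simpa using Finset.single_le_sum this (Finset.mem_univ i)

lemma h5_restrict (u : (ι ⊕ κ) → ℂ) :
    ‖((WithLp.equiv 2 (κ → ℂ)).symm (u ∘ Sum.inr) : EuclideanSpace ℂ κ)‖
      ≤ ‖((WithLp.equiv 2 ((ι ⊕ κ) → ℂ)).symm u : EuclideanSpace ℂ (ι ⊕ κ))‖ := by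
  simp only [EuclideanSpace.norm_eq]
  apply Real.sqrt_le_sqrt
  simp only [WithLp.equiv_symm_apply, PiLp.toLp_apply, Fintype.sum_sum_type, Function.comp_apply]
  exact le_add_of_nonneg_left (Finset.sum_nonneg fun j _ => sq_nonneg _)

lemma h6_elim_zero (x : ι → ℂ) :
    ‖((WithLp.equiv 2 ((ι ⊕ κ) → ℂ)).symm (Sum.elim x 0) : EuclideanSpace ℂ (ι ⊕ κ))‖
      = ‖((WithLp.equiv 2 (ι → ℂ)).symm x : EuclideanSpace ℂ ι)‖ := by
  simp only [EuclideanSpace.norm_eq]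
  congr 1
  simp [Fintype.sum_sum_type]

lemma h2_mulVec (X : Matrix ι κ ℂ) (v : κ → ℂ) :
    ‖((WithLp.equiv 2 (ι → ℂ)).symm (X *ᵥ v) : EuclideanSpace ℂ ι)‖
      ≤ ‖X‖ * ‖((WithLp.equiv 2 (κ → ℂ)).symm v : EuclideanSpace ℂ κ)‖ :=
  X.l2_opNorm_mulVec ((WithLp.equiv 2 (κ → ℂ)).symm v)

lemma h3_entry (X : Matrix ι κ ℂ) (i : ι) (j : κ) : ‖X i j‖ ≤ ‖X‖ := by
  have h := h2_mulVec X (Pi.single j 1)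
  have hv : ‖((WithLp.equiv 2 (κ → ℂ)).symm (Pi.single j 1) : EuclideanSpace ℂ κ)‖ = 1 := by
    simpa using EuclideanSpace.norm_single j (1:ℂ)
  rw [hv, mul_one] at h
  refine le_trans ?_ ((h1_coord (X *ᵥ Pi.single j 1) i).trans h)
  simp [Matrix.mulVec_single]

lemma h4_toBlocks21 (X : Matrix (ι ⊕ κ) (ι ⊕ κ) ℂ) : ‖X.toBlocks₂₁‖ ≤ ‖X‖ := by
  rw [Matrix.l2_opNorm_def]
  apply ContinuousLinearMap.opNorm_le_bound _ (norm_nonneg X)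
  intro z
  set v : ι → ℂ := (WithLp.equiv 2 (ι → ℂ)) z with hv
  have happ : (LinearEquiv.trans Matrix.toEuclideanLin LinearMap.toContinuousLinearMap
      X.toBlocks₂₁) z
      = ((WithLp.equiv 2 (κ → ℂ)).symm (X.toBlocks₂₁ *ᵥ v) : EuclideanSpace ℂ κ) := rfl
  rw [happ]
  have hsub : X.toBlocks₂₁ *ᵥ v = (X *ᵥ Sum.elim v 0) ∘ Sum.inr := by
    funext i
    simp [Matrix.mulVec, dotProduct, Fintype.sum_sum_type, Matrix.toBlocks₂₁]
  rw [hsub]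
  calc ‖((WithLp.equiv 2 (κ → ℂ)).symm ((X *ᵥ Sum.elim v 0) ∘ Sum.inr) : EuclideanSpace ℂ κ)‖
      ≤ ‖((WithLp.equiv 2 ((ι ⊕ κ) → ℂ)).symm (X *ᵥ Sum.elim v 0) : EuclideanSpace ℂ (ι ⊕ κ))‖ :=
        h5_restrict _
    _ ≤ ‖X‖ * ‖((WithLp.equiv 2 ((ι ⊕ κ) → ℂ)).symm (Sum.elim v 0) : EuclideanSpace ℂ (ι ⊕ κ))‖ :=
        h2_mulVec _ _
    _ = ‖X‖ * ‖z‖ := by rw [h6_elim_zero]; rfl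

lemma hdot_sq (w : ι → ℂ) :
    star w ⬝ᵥ w = ((‖((WithLp.equiv 2 (ι → ℂ)).symm w : EuclideanSpace ℂ ι)‖ : ℝ) : ℂ)^2 := by
  rw [dotProduct_comm, ← EuclideanSpace.inner_toLp_toLp, ← WithLp.equiv_symm_apply, inner_self_eq_norm_sq_to_K]
  norm_cast

open scoped MatrixOrder in
lemma h7_norm_inv_le {n₁ n₂ : Type*} [Fintype n₁] [Fintype n₂] [DecidableEq n₁] [DecidableEq n₂]
    (M : Matrix (n₁ ⊕ n₂) (n₁ ⊕ n₂) ℂ) (hM : M.PosDef)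
    (N : Matrix n₁ n₁ ℂ) (hN : N = (M⁻¹).toBlocks₁₁) (hNu : IsUnit N) :
    ‖N⁻¹‖ ≤ ‖M‖ := by
  have hdet : IsUnit M.det := (Matrix.isUnit_iff_isUnit_det M).mp hM.isUnit
  have hps := hM.posSemidef
  set R := CFC.sqrt M with hRdef
  have hRR : R * R = M := CFC.sqrt_mul_sqrt_self M hps.nonneg
  have hRh : Rᴴ = R := (CFC.sqrt_nonneg M).posSemidef.isHermitian
  have hRN : ‖R‖ * ‖R‖ = ‖M‖ := by
    rw [← Matrix.l2_opNorm_conjTranspose_mul_self R, hRh, hRR]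
  have hMinvh : (M⁻¹)ᴴ = M⁻¹ := hM.isHermitian.inv
  have key : ∀ y : (n₁ ⊕ n₂) → ℂ, star y ⬝ᵥ (M *ᵥ y) =
      ((‖((WithLp.equiv 2 ((n₁ ⊕ n₂) → ℂ)).symm (R *ᵥ y) :
        EuclideanSpace ℂ (n₁ ⊕ n₂))‖ : ℝ) : ℂ)^2 := by
    intro y
    have h1 : M *ᵥ y = R *ᵥ (R *ᵥ y) := by rw [Matrix.mulVec_mulVec, hRR]
    rw [h1, Matrix.dotProduct_mulVec, show star y ᵥ* R = star (R *ᵥ y) by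
      rw [Matrix.star_mulVec, hRh], hdot_sq]
  have hb : ∀ x : n₁ → ℂ,
      ‖((WithLp.equiv 2 (n₁ → ℂ)).symm x : EuclideanSpace ℂ n₁)‖^2
        ≤ ‖M‖ * (star x ⬝ᵥ (N *ᵥ x)).re := by
    intro x
    set u : (n₁ ⊕ n₂) → ℂ := Sum.elim x 0 with hu
    set y := M⁻¹ *ᵥ u with hy
    have hMy : M *ᵥ y = u := by
      rw [hy, Matrix.mulVec_mulVec, Matrix.mul_nonsing_inv _ hdet, Matrix.one_mulVec]
    have h2 : star y ⬝ᵥ (M *ᵥ y) = star x ⬝ᵥ (N *ᵥ x) := by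
      rw [hMy, show star y = star u ᵥ* M⁻¹ by rw [hy, Matrix.star_mulVec, hMinvh],
        ← Matrix.dotProduct_mulVec]
      conv_lhs => rw [← Matrix.fromBlocks_toBlocks M⁻¹]
      rw [hN, hu]
      simp [Matrix.fromBlocks_mulVec, Function.star_sumElim, sumElim_dotProduct_sumElim]
    have h3 := key y
    rw [h2] at h3
    have hre : (star x ⬝ᵥ (N *ᵥ x)).re
        = ‖((WithLp.equiv 2 ((n₁ ⊕ n₂) → ℂ)).symm (R *ᵥ y) :
            EuclideanSpace ℂ (n₁ ⊕ n₂))‖^2 := by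
      rw [h3, ← Complex.ofReal_pow, Complex.ofReal_re]
    rw [hre]
    have h4 : ‖((WithLp.equiv 2 ((n₁ ⊕ n₂) → ℂ)).symm u : EuclideanSpace ℂ (n₁ ⊕ n₂))‖
        ≤ ‖R‖ * ‖((WithLp.equiv 2 ((n₁ ⊕ n₂) → ℂ)).symm (R *ᵥ y) :
            EuclideanSpace ℂ (n₁ ⊕ n₂))‖ := by
      have : u = R *ᵥ (R *ᵥ y) := by rw [← hMy, ← hRR, ← Matrix.mulVec_mulVec]
      rw [this]
      exact h2_mulVec _ _
    have h5 : ‖((WithLp.equiv 2 ((n₁ ⊕ n₂) → ℂ)).symm u : EuclideanSpace ℂ (n₁ ⊕ n₂))‖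
        = ‖((WithLp.equiv 2 (n₁ → ℂ)).symm x : EuclideanSpace ℂ n₁)‖ := by
      rw [hu]; exact h6_elim_zero x
    nlinarith [norm_nonneg ((WithLp.equiv 2 ((n₁ ⊕ n₂) → ℂ)).symm (R *ᵥ y) :
        EuclideanSpace ℂ (n₁ ⊕ n₂)),
      norm_nonneg ((WithLp.equiv 2 ((n₁ ⊕ n₂) → ℂ)).symm u : EuclideanSpace ℂ (n₁ ⊕ n₂)),
      norm_nonneg R]
  have hNdet : IsUnit N.det := (Matrix.isUnit_iff_isUnit_det N).mp hNu
  rw [Matrix.l2_opNorm_def]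
  apply ContinuousLinearMap.opNorm_le_bound _ (norm_nonneg M)
  intro z'
  set z : n₁ → ℂ := WithLp.equiv 2 (n₁ → ℂ) z' with hz
  have happ : (LinearEquiv.trans Matrix.toEuclideanLin LinearMap.toContinuousLinearMap N⁻¹) z'
      = ((WithLp.equiv 2 (n₁ → ℂ)).symm (N⁻¹ *ᵥ z) : EuclideanSpace ℂ n₁) := rfl
  rw [happ]
  set x := N⁻¹ *ᵥ z with hx
  have hNx : N *ᵥ x = z := by
    rw [hx, Matrix.mulVec_mulVec, Matrix.mul_nonsing_inv _ hNdet, Matrix.one_mulVec]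
  have hb' := hb x
  rw [hNx] at hb'
  have hzz : ((WithLp.equiv 2 (n₁ → ℂ)).symm z : EuclideanSpace ℂ n₁) = z' := by
    rw [hz]; exact (WithLp.equiv 2 (n₁ → ℂ)).symm_apply_apply z'
  have hcs : (star x ⬝ᵥ z).re
      ≤ ‖((WithLp.equiv 2 (n₁ → ℂ)).symm x : EuclideanSpace ℂ n₁)‖ * ‖z'‖ := by
    rw [← hzz, dotProduct_comm, ← EuclideanSpace.inner_toLp_toLp, ← WithLp.equiv_symm_apply]
    simpa using re_inner_le_norm (𝕜 := ℂ) ((WithLp.equiv 2 (n₁ → ℂ)).symm x)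
      ((WithLp.equiv 2 (n₁ → ℂ)).symm z)
  set a := ‖((WithLp.equiv 2 (n₁ → ℂ)).symm x : EuclideanSpace ℂ n₁)‖ with ha
  rcases eq_or_lt_of_le (show (0:ℝ) ≤ a from norm_nonneg _) with h0 | h0
  · rw [← h0]; exact mul_nonneg (norm_nonneg M) (norm_nonneg z')
  · have : a * a ≤ (‖M‖ * ‖z'‖) * a := by nlinarith [norm_nonneg M]
    exact le_of_mul_le_mul_right this h0

end helpers

open scoped Matrix.Norms.L2Operator

/-- For a positive definite Hermitian block matrix `M = [[A,B],[C,D]]`,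
with `N` the upper-left block of `M⁻¹` and `B̃` obtained from `B` by zeroing its first
row, for every `j`:
`|(N⁻¹)_{1,j} - A_{1,j}| ≤ ‖B - B̃‖∞·‖M⁻¹‖∞·‖M‖∞` and
`|(N⁻¹)_{j,1} - A_{j,1}| ≤ ‖B - B̃‖∞·‖M⁻¹‖∞·‖M‖∞`. -/
theorem statement5 {m₁ m₂ : ℕ} (hm₁ : 0 < m₁)
    (A : Matrix (Fin m₁) (Fin m₁) ℂ) (B : Matrix (Fin m₁) (Fin m₂) ℂ)
    (C : Matrix (Fin m₂) (Fin m₁) ℂ) (D : Matrix (Fin m₂) (Fin m₂) ℂ)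
    (M : Matrix (Fin m₁ ⊕ Fin m₂) (Fin m₁ ⊕ Fin m₂) ℂ)
    (hM : M = Matrix.fromBlocks A B C D)
    (hMpd : M.PosDef)
    (N : Matrix (Fin m₁) (Fin m₁) ℂ) (hN : N = (M⁻¹).toBlocks₁₁)
    (Btilde : Matrix (Fin m₁) (Fin m₂) ℂ)
    (hBtilde : Btilde = Matrix.of fun i j => if i = (⟨0, hm₁⟩ : Fin m₁) then 0 else B i j) :
    ∀ j : Fin m₁,
      ‖(N⁻¹) ⟨0, hm₁⟩ j - A ⟨0, hm₁⟩ j‖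
          ≤ spNorm (B - Btilde) * spNorm M⁻¹ * spNorm M ∧
      ‖(N⁻¹) j ⟨0, hm₁⟩ - A j ⟨0, hm₁⟩‖
          ≤ spNorm (B - Btilde) * spNorm M⁻¹ * spNorm M := by
  subst hM
  set i0 : Fin m₁ := ⟨0, hm₁⟩ with hi0
  -- block equalities from hermiticity
  have hherm : Matrix.fromBlocks Aᴴ Cᴴ Bᴴ Dᴴ = Matrix.fromBlocks A B C D := by
    rw [← Matrix.fromBlocks_conjTranspose]; exact hMpd.isHermitian
  have hAh : Aᴴ = A := by
    have := congrArg Matrix.toBlocks₁₁ hherm; simpa [Matrix.toBlocks_fromBlocks₁₁] using this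
  have hDh : Dᴴ = D := by
    have := congrArg Matrix.toBlocks₂₂ hherm; simpa [Matrix.toBlocks_fromBlocks₂₂] using this
  have hBh : Bᴴ = C := by
    have := congrArg Matrix.toBlocks₂₁ hherm; simpa [Matrix.toBlocks_fromBlocks₂₁] using this
  have hCh : Cᴴ = B := by
    have := congrArg Matrix.toBlocks₁₂ hherm; simpa [Matrix.toBlocks_fromBlocks₁₂] using this
  -- D is positive definite
  have hDpd : D.PosDef := by
    refine Matrix.PosDef.of_dotProduct_mulVec_pos hDh (fun x hx => ?_)
    have hx' : Sum.elim (0 : Fin m₁ → ℂ) x ≠ 0 := by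
      intro hcontra
      apply hx
      funext i
      exact congrFun hcontra (Sum.inr i)
    have := hMpd.dotProduct_mulVec_pos hx'
    simpa [Matrix.fromBlocks_mulVec, Function.star_sumElim,
      sumElim_dotProduct_sumElim] using this
  haveI iM : Invertible (Matrix.fromBlocks A B C D) := hMpd.isUnit.invertible
  haveI iD : Invertible D := hDpd.isUnit.invertible
  haveI iS : Invertible (A - B * ⅟D * C) := Matrix.invertibleOfFromBlocks₂₂Invertible A B C D
  have hiD : ⅟D = D⁻¹ := invOf_eq_nonsing_inv D
  have hMinv : (Matrix.fromBlocks A B C D)⁻¹ =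
      Matrix.fromBlocks (⅟(A - B * ⅟D * C)) (-(⅟(A - B * ⅟D * C) * B * ⅟D))
        (-(⅟D * C * ⅟(A - B * ⅟D * C))) (⅟D + ⅟D * C * ⅟(A - B * ⅟D * C) * B * ⅟D) := by
    rw [← invOf_eq_nonsing_inv]
    exact Matrix.invOf_fromBlocks₂₂_eq A B C D
  have hNval : N = ⅟(A - B * ⅟D * C) := by
    rw [hN, hMinv]; rfl
  haveI iN : Invertible N := hNval ▸ invertibleInvOf
  have hNinv : N⁻¹ = A - B * ⅟D * C := by
    rw [hNval, invOf_eq_nonsing_inv (A - B * ⅟D * C)]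
    exact Matrix.nonsing_inv_nonsing_inv _ (Matrix.isUnit_det_of_invertible _)
  have hR21 : ((Matrix.fromBlocks A B C D)⁻¹).toBlocks₂₁ = -(D⁻¹ * C * N) := by
    rw [hMinv, Matrix.toBlocks_fromBlocks₂₁, ← hNval, hiD]
  have hDC : D⁻¹ * C = -(((Matrix.fromBlocks A B C D)⁻¹).toBlocks₂₁ * N⁻¹) := by
    rw [hR21, Matrix.neg_mul, neg_neg, Matrix.mul_assoc,
      Matrix.mul_nonsing_inv _ (Matrix.isUnit_det_of_invertible N), Matrix.mul_one]
  have hMain : N⁻¹ - A = -(B * (D⁻¹ * C)) := by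
    rw [hNinv, hiD, Matrix.mul_assoc]
    abel
  have hPh : (B * (D⁻¹ * C))ᴴ = B * (D⁻¹ * C) := by
    rw [Matrix.conjTranspose_mul, Matrix.conjTranspose_mul, Matrix.conjTranspose_nonsing_inv,
      hDh, hBh, hCh, Matrix.mul_assoc]
  -- row-1 identity
  have hrow : ∀ j, (N⁻¹) i0 j - A i0 j = -(((B - Btilde) * (D⁻¹ * C)) i0 j) := by
    intro j
    have h1 : (N⁻¹) i0 j - A i0 j = (N⁻¹ - A) i0 j := rfl
    rw [h1, hMain]
    simp only [Matrix.neg_apply, neg_inj]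
    rw [Matrix.mul_apply, Matrix.mul_apply]
    apply Finset.sum_congr rfl
    intro k _
    congr 1
    simp [hBtilde]
  -- norm chain
  have hnormchain : ‖(B - Btilde) * (D⁻¹ * C)‖
      ≤ ‖B - Btilde‖ * (‖(Matrix.fromBlocks A B C D)⁻¹‖ * ‖Matrix.fromBlocks A B C D‖) := by
    refine le_trans (Matrix.l2_opNorm_mul _ _) ?_
    refine mul_le_mul_of_nonneg_left ?_ (norm_nonneg _)
    rw [hDC, norm_neg]
    refine le_trans (Matrix.l2_opNorm_mul _ _) ?_
    exact mul_le_mul (h4_toBlocks21 _)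
      (h7_norm_inv_le _ hMpd N hN (isUnit_of_invertible N))
      (norm_nonneg _) (norm_nonneg _)
  have hbound : ∀ j, ‖(N⁻¹) i0 j - A i0 j‖
      ≤ spNorm (B - Btilde) * spNorm (Matrix.fromBlocks A B C D)⁻¹
        * spNorm (Matrix.fromBlocks A B C D) := by
    intro j
    calc ‖(N⁻¹) i0 j - A i0 j‖
        = ‖((B - Btilde) * (D⁻¹ * C)) i0 j‖ := by
          rw [hrow j, norm_neg]
      _ ≤ ‖(B - Btilde) * (D⁻¹ * C)‖ := h3_entry _ _ _
      _ ≤ ‖B - Btilde‖ * (‖(Matrix.fromBlocks A B C D)⁻¹‖ * ‖Matrix.fromBlocks A B C D‖) :=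
          hnormchain
      _ = spNorm (B - Btilde) * spNorm (Matrix.fromBlocks A B C D)⁻¹
          * spNorm (Matrix.fromBlocks A B C D) := by
          rw [spNorm_eq_l2_opNorm, spNorm_eq_l2_opNorm, spNorm_eq_l2_opNorm, mul_assoc]
  intro j
  refine ⟨hbound j, ?_⟩
  have hsym : (N⁻¹) j i0 - A j i0 = (starRingEnd ℂ) ((N⁻¹) i0 j - A i0 j) := by
    have hP : (N⁻¹ - A)ᴴ = N⁻¹ - A := by
      rw [hMain, Matrix.conjTranspose_neg, hPh]
    have h2 := congrFun (congrFun hP j) i0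
    simpa [Matrix.conjTranspose_apply, Matrix.sub_apply] using h2.symm
  rw [hsym, Complex.norm_conj]
  exact hbound j
end

section
/- For m ≥ 1 let H_m be the m×m real tridiagonal matrix with (H_m)_{1,1} = 1, (H_m)_{i,i} = 2 for 2 ≤ i ≤ m, (H_m)_{i,i+1} = (H_m)_{i+1,i} = −1 for 1 ≤ i ≤ m−1, and all other entries 0. Then H_m is invertible and its inverse is given entrywise by (H_m⁻¹)_{i,j} = m + 1 − max(i,j) for all i,j ∈ {1,…,m}. -/
open Matrix Finset

def triH (m : ℕ) : Matrix (Fin m) (Fin m) ℝ :=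
  Matrix.of fun i j =>
    if i = j then (if (i : ℕ) = 0 then 1 else 2)
    else if (i : ℕ) + 1 = (j : ℕ) ∨ (j : ℕ) + 1 = (i : ℕ) then -1
    else 0

def triK (m : ℕ) : Matrix (Fin m) (Fin m) ℝ :=
  Matrix.of fun i j => (m : ℝ) - (max (i : ℕ) (j : ℕ) : ℕ)

lemma triH_mul_triK (m : ℕ) : triH m * triK m = 1 := by
  ext i j
  rw [Matrix.mul_apply]
  obtain ⟨a, hal⟩ := i
  obtain ⟨b, hbl⟩ := j
  have hone : (1 : Matrix (Fin m) (Fin m) ℝ) ⟨a, hal⟩ ⟨b, hbl⟩ = if a = b then 1 else 0 := by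
    rw [Matrix.one_apply]; simp [Fin.ext_iff]
  rw [hone]
  set v : ℕ → ℝ := fun k => (m : ℝ) - (max k b : ℕ) with hvdef
  have hvm : v m = 0 := by
    simp only [hvdef]
    rw [max_eq_left hbl.le]
    simp
  set g : ℕ → ℝ := fun k => (if a = k then (if a = 0 then (1:ℝ) else 2)
          else if a + 1 = k ∨ k + 1 = a then -1 else 0) * v k with hgdef
  have step1 : ∑ k : Fin m, triH m ⟨a, hal⟩ k * triK m k ⟨b, hbl⟩ = ∑ k ∈ range m, g k := by
    rw [Finset.sum_range fun k => _]
    apply Finset.sum_congr rfl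
    intro k _
    simp [triH, triK, Fin.ext_iff, v, g]
  have step2 : ∑ k ∈ range m, g k = ∑ k ∈ range (m + 2), g k := by
    apply Finset.sum_subset (by intro x hx; simp at hx ⊢; omega)
    intro k hk hk2
    simp only [mem_range] at hk hk2
    have hkm : m ≤ k := by omega
    rcases eq_or_lt_of_le hkm with rfl | hlt
    · simp [g, hvm]
    · have : ¬ (a = k) := by omega
      have h2 : ¬ (a + 1 = k ∨ k + 1 = a) := by omega
      simp [g, this, h2]
  rw [step1, step2]
  have hgsplit : ∀ k, g k = (if k = a then (if a = 0 then (1:ℝ) else 2) * v k else 0)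
      + (if k = a + 1 then -v k else 0)
      + (if a ≠ 0 ∧ k = a - 1 then -v k else 0) := by
    intro k
    simp only [hgdef]
    split_ifs
    all_goals (try (exfalso; omega))
    all_goals ring
  simp only [hgsplit]
  rw [Finset.sum_add_distrib, Finset.sum_add_distrib,
    Finset.sum_ite_eq' (range (m+2)) a, Finset.sum_ite_eq' (range (m+2)) (a+1)]
  have h3 : ∑ k ∈ range (m+2), (if a ≠ 0 ∧ k = a - 1 then -v k else 0)
      = if a ≠ 0 then -v (a-1) else 0 := by
    by_cases h0 : a = 0
    · simp [h0]
    · simp only [h0, ne_eq, not_false_eq_true, true_and, if_true]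
      rw [Finset.sum_ite_eq' (range (m+2)) (a-1)]
      rw [if_pos (Finset.mem_range.mpr (by omega))]
  rw [h3, if_pos (Finset.mem_range.mpr (by omega : a < m + 2)),
    if_pos (Finset.mem_range.mpr (by omega : a + 1 < m + 2))]
  by_cases h0 : a = 0
  · simp only [h0, ne_eq, not_true_eq_false, if_false, if_true, ite_false, hvdef]
    rcases Nat.eq_zero_or_pos b with hb0 | hb1
    · rw [if_pos (by omega), hb0]
      norm_num
    · rw [if_neg (by omega), max_eq_right (by omega : 1 ≤ b), max_eq_right (by omega : (0:ℕ) ≤ b)]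
      ring
  · simp only [ne_eq, h0, not_false_eq_true, if_true, if_false, hvdef]
    have hcast : ((a - 1 : ℕ) : ℝ) = (a : ℝ) - 1 := by
      have := Nat.cast_sub (by omega : 1 ≤ a) (R := ℝ)
      simpa using this
    rcases lt_trichotomy a b with h | h | h
    · rw [if_neg (by omega), max_eq_right h.le, max_eq_right (by omega : a + 1 ≤ b),
        max_eq_right (by omega : a - 1 ≤ b)]
      ring
    · rw [if_pos h, max_eq_left (le_of_eq h.symm), max_eq_left (by omega : b ≤ a + 1),
        max_eq_right (by omega : a - 1 ≤ b)]
      subst h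
      push_cast
      ring
    · rw [if_neg (by omega), max_eq_left h.le, max_eq_left (by omega : b ≤ a + 1),
        max_eq_left (by omega : b ≤ a - 1), hcast]
      push_cast
      ring

/-- `H_m` is invertible and `(H_m⁻¹)_{i,j} = m + 1 - max(i,j)`
(in `1`-based indices; in the `0`-based indices used here, `m - max(i,j)`). -/
theorem statement14 (m : ℕ) (hm : 1 ≤ m) :
    IsUnit (triH m) ∧
    ∀ i j : Fin m, (triH m)⁻¹ i j = (m : ℝ) - (max (i : ℕ) (j : ℕ) : ℝ) := by
  have h := triH_mul_triK m
  have := invertibleOfRightInverse _ _ h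
  refine ⟨isUnit_of_invertible _, fun i j => ?_⟩
  rw [Matrix.inv_eq_right_inv h]
  simp [triK]
end

section
/- Let X and Y be real-valued random variables defined on a common probability space (not assumed independent) such that the law of X is the Gaussian distribution with mean μ and variance σ² and the law of Y is the Gaussian distribution with mean ν and variance τ². Set C := 2·max{(√2·σ + |μ|)², (√2·τ + |ν|)²}. Then for every integer q ≥ 1, E[(XY − E[XY])^{2q}] ≤ (2q)! · C^{2q}. -/
open MeasureTheory ProbabilityTheory
open Real Set
open scoped NNReal ENNReal

lemma intOn_pow_exp {r : ℝ} (hr : 0 < r) (n : ℕ) :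
    IntegrableOn (fun y : ℝ ↦ y ^ n * Real.exp (-(r * y))) (Ioi 0) := by
  have h := integrableOn_rpow_mul_exp_neg_mul_rpow (s := (n : ℝ)) (p := 1)
    (by exact_mod_cast neg_one_lt_zero.trans_le n.cast_nonneg) zero_lt_one hr
  refine h.congr_fun (fun x hx ↦ ?_) measurableSet_Ioi
  dsimp only
  rw [Real.rpow_natCast, Real.rpow_one, neg_mul]

lemma intVal_pow_exp {r : ℝ} (hr : 0 < r) (n : ℕ) :
    ∫ y in Ioi (0:ℝ), y ^ n * Real.exp (-(r * y)) = (1/r) ^ (n+1) * n.factorial := by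
  have h := integral_rpow_mul_exp_neg_mul_Ioi (a := (n:ℝ) + 1) (r := r)
    (by positivity) hr
  rw [show ((n:ℝ) + 1 - 1) = (n:ℝ) by ring] at h
  simp_rw [Real.rpow_natCast] at h
  rw [h, Real.Gamma_nat_eq_factorial]
  rw [show ((n:ℝ) + 1) = ((n+1 : ℕ) : ℝ) by push_cast; ring, Real.rpow_natCast]

lemma halfpow_bound {s y : ℝ} (hs : 0 < s) (hy : 0 < y) (k : ℕ) (hk : 1 ≤ k) :
    y ^ ((k:ℝ) - 1/2) ≤ Real.sqrt s * y ^ (k-1) + (Real.sqrt s)⁻¹ * y ^ k := by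
  have hsq : 0 < Real.sqrt s := Real.sqrt_pos.2 hs
  have h1 : y ^ ((k:ℝ) - 1/2) = y ^ (k-1) * y ^ (1/2 : ℝ) := by
    rw [← Real.rpow_natCast y (k-1), ← Real.rpow_add hy]
    congr 1
    have : ((k-1 : ℕ) : ℝ) = (k : ℝ) - 1 := by
      have := Nat.cast_sub hk (R := ℝ); simpa using this
    rw [this]; ring
  have h2 : y ^ ((k:ℝ) - 1/2) = y ^ k * y ^ (-(1/2) : ℝ) := by
    rw [← Real.rpow_natCast y k, ← Real.rpow_add hy]
    rw [show ((k:ℝ) + -(1/2)) = (k:ℝ) - 1/2 by ring]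
  rcases le_total y s with hys | hys
  · have key : y ^ ((1:ℝ)/2) ≤ Real.sqrt s := by
      rw [Real.sqrt_eq_rpow]
      exact Real.rpow_le_rpow hy.le hys (by norm_num)
    have h3 : y ^ ((k:ℝ) - 1/2) ≤ y ^ (k-1) * Real.sqrt s := by
      rw [h1]; exact mul_le_mul_of_nonneg_left key (by positivity)
    have h4 : 0 ≤ (Real.sqrt s)⁻¹ * y ^ k := by positivity
    nlinarith [h3]
  · have key : y ^ (-(1:ℝ)/2) ≤ (Real.sqrt s)⁻¹ := by
      rw [Real.sqrt_eq_rpow, ← Real.rpow_neg hs.le]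
      rw [show (-(1:ℝ)/2) = -(1/2) by ring]
      exact Real.rpow_le_rpow_of_nonpos hs hys (by norm_num)
    have h3 : y ^ ((k:ℝ) - 1/2) ≤ y ^ k * (Real.sqrt s)⁻¹ := by
      rw [h2, show (-((1:ℝ)/2)) = -(1)/2 by ring]
      exact mul_le_mul_of_nonneg_left key (by positivity)
    have h4 : 0 ≤ Real.sqrt s * y ^ (k-1) := by positivity
    nlinarith [h3]

lemma I2bound {v : ℝ} (hv : 0 < v) (q : ℕ) (hq : 1 ≤ q) :
    ∫ x : ℝ, |x| ^ (4*q) * Real.exp (-(1/(2*v) * x^2))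
      ≤ Real.sqrt (2*v) * (2*v)^(2*q) * ((3:ℝ)/2 * (2*q).factorial) := by
  set r : ℝ := 1/(2*v) with hrdef
  have hr : 0 < r := by positivity
  -- step 1 : reduce to Ioi 0
  have step1 : ∫ x : ℝ, |x| ^ (4*q) * Real.exp (-(r * x^2))
      = 2 * ∫ t in Ioi (0:ℝ), t ^ (4*q) * Real.exp (-(r * t^2)) := by
    have h := integral_comp_abs (f := fun t : ℝ ↦ t ^ (4*q) * Real.exp (-(r * t^2)))
    simp_rw [sq_abs] at h
    exact h
  -- step 2 : substitution y = x ^ 2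
  have step2 : ∫ t in Ioi (0:ℝ), t ^ (4*q) * Real.exp (-(r * t^2))
      = ∫ y in Ioi (0:ℝ), (1/2) * (y ^ (((2*q : ℕ):ℝ) - 1/2) * Real.exp (-(r * y))) := by
    have hsub := integral_comp_rpow_Ioi
      (fun y : ℝ ↦ (1/2) * (y ^ (((2*q : ℕ):ℝ) - 1/2) * Real.exp (-(r * y))))
      (p := (2:ℝ)) two_ne_zero
    rw [← hsub]
    refine setIntegral_congr_fun measurableSet_Ioi (fun x hx ↦ ?_)
    have hx0 : (0:ℝ) < x := hx
    have hx2 : x ^ ((2:ℝ)) = x^2 := by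
      rw [show (2:ℝ) = ((2:ℕ):ℝ) by norm_num, Real.rpow_natCast]
    have hpow : (x ^ 2) ^ (((2*q : ℕ):ℝ) - 1/2) = x ^ (4*q-1) := by
      rw [← hx2, ← Real.rpow_mul hx0.le, show (2:ℝ) * (((2*q : ℕ):ℝ) - 1/2)
        = ((4*q-1 : ℕ):ℝ) by push_cast [Nat.cast_sub (by omega : 1 ≤ 4*q)]; ring,
        Real.rpow_natCast]
    have hxx : x * x ^ (4*q-1) = x ^ (4*q) := by
      rw [← pow_succ', show (4*q-1)+1 = 4*q by omega]
    simp only [smul_eq_mul, hx2, hpow, abs_two, show (2:ℝ) - 1 = 1 from by norm_num,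
      Real.rpow_one]
    rw [← hxx]
    ring
  -- step 3 : bound the half-power integral
  have hfi : IntegrableOn (fun y : ℝ ↦ y ^ (((2*q : ℕ):ℝ) - 1/2) * Real.exp (-(r * y)))
      (Ioi 0) := by
    have h := integrableOn_rpow_mul_exp_neg_mul_rpow (s := ((2*q : ℕ):ℝ) - 1/2) (p := 1)
      (by have : (0:ℝ) ≤ ((2*q : ℕ):ℝ) := Nat.cast_nonneg _; linarith) zero_lt_one hr
    refine h.congr_fun (fun x hx ↦ ?_) measurableSet_Ioi
    dsimp only
    rw [Real.rpow_one, neg_mul]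
  have hgi : IntegrableOn (fun y : ℝ ↦ Real.sqrt (2*v) * (y ^ (2*q-1) * Real.exp (-(r * y)))
      + (Real.sqrt (2*v))⁻¹ * (y ^ (2*q) * Real.exp (-(r * y)))) (Ioi 0) :=
    ((intOn_pow_exp hr (2*q-1)).const_mul _).add ((intOn_pow_exp hr (2*q)).const_mul _)
  have step3 : ∫ y in Ioi (0:ℝ), y ^ (((2*q : ℕ):ℝ) - 1/2) * Real.exp (-(r * y))
      ≤ Real.sqrt (2*v) * ((2*v) ^ (2*q) * ((2*q-1).factorial : ℝ))
        + (Real.sqrt (2*v))⁻¹ * ((2*v) ^ (2*q+1) * ((2*q).factorial : ℝ)) := by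
    have hmono := setIntegral_mono_on hfi hgi measurableSet_Ioi (fun y hy ↦ by
      have hb := halfpow_bound (s := 2*v) (by positivity) (show (0:ℝ) < y from hy)
        (k := 2*q) (by omega)
      have he : (0:ℝ) ≤ Real.exp (-(r * y)) := (Real.exp_pos _).le
      calc y ^ (((2*q : ℕ):ℝ) - 1/2) * Real.exp (-(r * y))
          ≤ (Real.sqrt (2*v) * y ^ (2*q-1) + (Real.sqrt (2*v))⁻¹ * y ^ (2*q))
            * Real.exp (-(r * y)) := mul_le_mul_of_nonneg_right hb he
        _ = _ := by ring)
    calc _ ≤ _ := hmono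
      _ = Real.sqrt (2*v) * (∫ y in Ioi (0:ℝ), y ^ (2*q-1) * Real.exp (-(r * y)))
          + (Real.sqrt (2*v))⁻¹ * (∫ y in Ioi (0:ℝ), y ^ (2*q) * Real.exp (-(r * y))) := by
          rw [integral_add ((intOn_pow_exp hr (2*q-1)).const_mul _)
            ((intOn_pow_exp hr (2*q)).const_mul _), integral_const_mul, integral_const_mul]
      _ = _ := by
          rw [intVal_pow_exp hr (2*q-1), intVal_pow_exp hr (2*q),
            show (2*q-1)+1 = 2*q by omega, hrdef, one_div_one_div]
  -- assemble
  rw [step1, step2, integral_const_mul]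
  have hsq : Real.sqrt (2*v) * Real.sqrt (2*v) = 2*v := Real.mul_self_sqrt (by positivity)
  have hsqpos : 0 < Real.sqrt (2*v) := Real.sqrt_pos.2 (by positivity)
  have hkey : (Real.sqrt (2*v))⁻¹ * ((2*v) ^ (2*q+1) * ((2*q).factorial : ℝ))
      = Real.sqrt (2*v) * ((2*v) ^ (2*q) * ((2*q).factorial : ℝ)) := by
    rw [pow_succ, ← hsq]
    field_simp
    rw [Real.sqrt_sq (Real.sqrt_nonneg _)]
  have hfact : ((2*q-1).factorial : ℝ) + ((2*q).factorial : ℝ) ≤ (3/2) * (2*q).factorial := by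
    obtain ⟨n, hn⟩ : ∃ n, 2*q = n+1 := ⟨2*q-1, by omega⟩
    have h1 : (2*q).factorial = (2*q) * (2*q-1).factorial := by
      rw [hn, Nat.factorial_succ]; norm_num
    have hfp : (0:ℝ) < ((2*q-1).factorial : ℝ) := by
      exact_mod_cast (2*q-1).factorial_pos
    have h2 : (2:ℝ) * ((2*q-1).factorial : ℝ) ≤ ((2*q).factorial : ℝ) := by
      rw [h1]; push_cast
      have h2q : (2:ℝ) ≤ ((2*q : ℕ):ℝ) := by exact_mod_cast (by omega : 2 ≤ 2*q)
      push_cast at h2q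
      nlinarith
    linarith
  have hpowpos : (0:ℝ) < (2*v)^(2*q) := by positivity
  nlinarith [step3, mul_le_mul_of_nonneg_left hfact (mul_nonneg hsqpos.le hpowpos.le)]

lemma moment4q (σ : ℝ≥0) (m : ℝ) (q : ℕ) (hq : 1 ≤ q) :
    ∫⁻ x, (ENNReal.ofReal |x - m|) ^ (4*q) ∂(gaussianReal m (σ^2))
      ≤ ENNReal.ofReal (((2*q).factorial : ℝ) * (Real.sqrt 2 * σ) ^ (4*q)) := by
  have hF : Measurable fun x : ℝ ↦ (ENNReal.ofReal |x - m|) ^ (4*q) :=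
    (((measurable_id.sub_const m).abs).ennreal_ofReal).pow_const _
  by_cases hσ : σ = 0
  · subst hσ
    rw [show ((0:ℝ≥0)^2) = 0 by norm_num, gaussianReal_zero_var, lintegral_dirac' _ hF]
    simp only [sub_self, abs_zero, ENNReal.ofReal_zero,
      zero_pow (by omega : 4*q ≠ 0)]
    exact bot_le
  · set v : ℝ := (σ:ℝ)^2 with hvdef
    have hv : 0 < v := by positivity
    have hv2 : ((σ^2 : ℝ≥0) : ℝ) = v := by push_cast; rfl
    set c : ℝ := (Real.sqrt (2*π*v))⁻¹ with hcdef
    have hgpdf : ∀ x : ℝ, gaussianPDFReal m (σ^2) x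
        = c * Real.exp (-(x-m)^2/(2*v)) := by
      intro x; rw [gaussianPDFReal, hv2]
    have hgpdf0 : ∀ x : ℝ, gaussianPDFReal 0 (σ^2) x
        = c * Real.exp (-(1/(2*v) * x^2)) := by
      intro x
      rw [gaussianPDFReal, hv2, show -(x-0)^2/(2*v) = -(1/(2*v) * x^2) by ring]
    set g : ℝ → ℝ := fun x ↦ gaussianPDFReal m (σ^2) x * |x - m| ^ (4*q) with hgdef
    have hgnn : ∀ x, 0 ≤ g x := fun x ↦
      mul_nonneg (gaussianPDFReal_nonneg _ _ _) (pow_nonneg (abs_nonneg _) _)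
    -- base integrability
    have hbase : Integrable (fun x : ℝ ↦ gaussianPDFReal 0 (σ^2) x * |x| ^ (4*q)) := by
      have h0 : Integrable (fun x : ℝ ↦ x ^ ((4*q : ℕ):ℝ) * Real.exp (-(1/(2*v)) * x^2)) :=
        integrable_rpow_mul_exp_neg_mul_sq (by positivity)
          (by have : (0:ℝ) ≤ ((4*q : ℕ):ℝ) := Nat.cast_nonneg _; linarith)
      have h1 : Integrable (fun x : ℝ ↦ |x| ^ (4*q) * Real.exp (-(1/(2*v) * x^2))) := by
        refine h0.congr (ae_of_all _ fun x ↦ ?_)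
        have habs : |x| ^ (4*q) = x ^ (4*q) := Even.pow_abs ⟨2*q, by ring⟩ x
        simp only [Real.rpow_natCast, ← habs, neg_mul]
      refine (h1.const_mul c).congr (ae_of_all _ fun x ↦ ?_)
      simp only [hgpdf0]
      ring
    have hInt : Integrable g := by
      have := hbase.comp_sub_right m
      refine this.congr (ae_of_all _ fun x ↦ ?_)
      simp only [hgdef]
      rw [gaussianPDFReal_sub, zero_add]
    -- move to lintegral
    rw [gaussianReal_of_var_ne_zero m (pow_ne_zero 2 hσ),
      lintegral_withDensity_eq_lintegral_mul _ (measurable_gaussianPDF _ _) hF]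
    have hpt : (fun x ↦ (gaussianPDF m (σ^2) * fun x ↦ (ENNReal.ofReal |x - m|) ^ (4*q)) x)
        = fun x ↦ ENNReal.ofReal (g x) := by
      funext x
      simp only [Pi.mul_apply, gaussianPDF]
      rw [← ENNReal.ofReal_pow (abs_nonneg _),
        ← ENNReal.ofReal_mul (gaussianPDFReal_nonneg _ _ _)]
    rw [hpt, ← ofReal_integral_eq_lintegral_ofReal hInt (ae_of_all _ hgnn)]
    apply ENNReal.ofReal_le_ofReal
    -- real-valued estimate
    have htrans : ∫ x, g x = ∫ x, gaussianPDFReal 0 (σ^2) x * |x| ^ (4*q) := by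
      rw [← integral_sub_right_eq_self (fun x ↦ gaussianPDFReal 0 (σ^2) x * |x| ^ (4*q)) m]
      congr 1; funext x
      simp only [hgdef]
      rw [gaussianPDFReal_sub, zero_add]
    rw [htrans]
    have hform : (fun x : ℝ ↦ gaussianPDFReal 0 (σ^2) x * |x| ^ (4*q))
        = fun x : ℝ ↦ c * (|x| ^ (4*q) * Real.exp (-(1/(2*v) * x^2))) := by
      funext x
      rw [hgpdf0]
      ring
    rw [hform, integral_const_mul]
    have hc : 0 ≤ c := by positivity
    have hI2 := I2bound hv q hq
    have hstep := mul_le_mul_of_nonneg_left hI2 hc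
    refine hstep.trans ?_
    -- final numeric computation
    have hsqrtpi : (3/2 : ℝ) ≤ Real.sqrt π := by
      rw [show (3/2:ℝ) = Real.sqrt ((3/2)^2) by
        rw [Real.sqrt_sq (by norm_num)]]
      exact Real.sqrt_le_sqrt (by nlinarith [Real.pi_gt_three])
    have hcsq : c * Real.sqrt (2*v) = (Real.sqrt π)⁻¹ := by
      rw [hcdef, show 2*π*v = π*(2*v) by ring, Real.sqrt_mul Real.pi_pos.le]
      rw [mul_inv]
      field_simp
    have hpow2 : (Real.sqrt 2 * σ) ^ (4*q) = (2*v)^(2*q) := by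
      rw [mul_pow, show 4*q = 2*(2*q) by ring, pow_mul, pow_mul,
        Real.sq_sqrt (by norm_num : (0:ℝ) ≤ 2)]
      rw [hvdef, mul_pow, ← pow_mul]
      ring_nf
    rw [hpow2]
    have hsp : 0 < Real.sqrt π := Real.sqrt_pos.2 Real.pi_pos
    have hfac : (0:ℝ) < (2*q).factorial := by exact_mod_cast (2*q).factorial_pos
    have hpowpos : (0:ℝ) < (2*v)^(2*q) := by positivity
    calc c * (Real.sqrt (2*v) * (2*v)^(2*q) * ((3:ℝ)/2 * (2*q).factorial))
        = (Real.sqrt π)⁻¹ * ((3:ℝ)/2) * ((2*q).factorial * (2*v)^(2*q)) := by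
          rw [← hcsq]; ring
      _ ≤ 1 * ((2*q).factorial * (2*v)^(2*q)) := by
          apply mul_le_mul_of_nonneg_right _ (by positivity)
          rw [inv_mul_le_iff₀ hsp, mul_one]
          linarith
      _ = ((2*q).factorial : ℝ) * (2*v)^(2*q) := by ring

lemma momentAbs4q (σ : ℝ≥0) (m : ℝ) (q : ℕ) (hq : 1 ≤ q) :
    ∫⁻ x, (ENNReal.ofReal |x|) ^ (4*q) ∂(gaussianReal m (σ^2))
      ≤ ENNReal.ofReal (((2*q).factorial : ℝ) * (Real.sqrt 2 * σ + |m|) ^ (4*q)) := by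
  set ν := gaussianReal m (σ^2) with hν
  set p : ℝ := ((4*q : ℕ) : ℝ) with hp
  have hp0 : 0 < p := by
    rw [hp]; exact_mod_cast (by omega : 0 < 4*q)
  have hp1 : 1 ≤ p := by
    rw [hp]; exact_mod_cast (by omega : 1 ≤ 4*q)
  set f : ℝ → ℝ≥0∞ := fun _ ↦ ENNReal.ofReal |m| with hfdef
  set g : ℝ → ℝ≥0∞ := fun x ↦ ENNReal.ofReal |x - m| with hgdef
  have hfm : AEMeasurable f ν := aemeasurable_const
  have hgm : AEMeasurable g ν :=
    (((measurable_id.sub_const m).abs).ennreal_ofReal).aemeasurable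
  set c : ℝ≥0∞ := ENNReal.ofReal |m| with hcdef
  set s : ℝ≥0∞ := ENNReal.ofReal (Real.sqrt 2 * σ) with hsdef
  set D : ℝ≥0∞ := ENNReal.ofReal (((2*q).factorial : ℝ)) with hDdef
  set T : ℝ≥0∞ := ∫⁻ x, (ENNReal.ofReal |x|) ^ (4*q) ∂ν with hT
  -- Minkowski
  have hmink := ENNReal.lintegral_Lp_add_le (μ := ν) hfm hgm hp1
  have hconst : (∫⁻ _ : ℝ, f 0 ^ p ∂ν) ^ (1/p) = c := by
    rw [lintegral_const, measure_univ, mul_one, ← ENNReal.rpow_mul,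
      mul_one_div_cancel hp0.ne', ENNReal.rpow_one]
  -- centered bound, rpow form
  have hcent : ∫⁻ x, g x ^ p ∂ν ≤ D * s ^ p := by
    have h := moment4q σ m q hq
    rw [← hν] at h
    calc ∫⁻ x, g x ^ p ∂ν = ∫⁻ x, g x ^ (4*q) ∂ν := by
          simp_rw [hp, ENNReal.rpow_natCast]
      _ ≤ ENNReal.ofReal (((2*q).factorial : ℝ) * (Real.sqrt 2 * σ) ^ (4*q)) := h
      _ = D * s ^ p := by
          rw [ENNReal.ofReal_mul (by positivity), ENNReal.ofReal_pow (by positivity),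
            hp, ENNReal.rpow_natCast]
  have hR : (∫⁻ x, g x ^ p ∂ν) ^ (1/p) ≤ D ^ (1/p) * s := by
    calc (∫⁻ x, g x ^ p ∂ν) ^ (1/p) ≤ (D * s ^ p) ^ (1/p) :=
          ENNReal.rpow_le_rpow hcent (by positivity)
      _ = D ^ (1/p) * s := by
          rw [ENNReal.mul_rpow_of_nonneg _ _ (by positivity), ← ENNReal.rpow_mul,
            mul_one_div_cancel hp0.ne', ENNReal.rpow_one]
  have hD1 : (1:ℝ≥0∞) ≤ D ^ (1/p) := by
    have h1 : (1:ℝ≥0∞) ≤ D := by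
      rw [hDdef, show (1:ℝ≥0∞) = ENNReal.ofReal 1 by simp]
      exact ENNReal.ofReal_le_ofReal (by exact_mod_cast (2*q).factorial_pos)
    calc (1:ℝ≥0∞) = 1 ^ (1/p) := (ENNReal.one_rpow _).symm
      _ ≤ D ^ (1/p) := ENNReal.rpow_le_rpow h1 (by positivity)
  -- assemble
  have hTle : T ^ (1/p) ≤ c + (∫⁻ x, g x ^ p ∂ν) ^ (1/p) := by
    have hmono : T ≤ ∫⁻ x, (f + g) x ^ p ∂ν := by
      rw [hT]
      refine lintegral_mono fun x ↦ ?_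
      have habs : |x| ≤ |m| + |x - m| := by
        calc |x| = |m + (x - m)| := by ring_nf
          _ ≤ |m| + |x - m| := abs_add_le _ _
      have hle : ENNReal.ofReal |x| ≤ (f + g) x := by
        calc ENNReal.ofReal |x| ≤ ENNReal.ofReal (|m| + |x - m|) :=
              ENNReal.ofReal_le_ofReal habs
          _ = (f + g) x := ENNReal.ofReal_add (abs_nonneg _) (abs_nonneg _)
      calc (ENNReal.ofReal |x|) ^ (4*q) = (ENNReal.ofReal |x|) ^ p := by
            rw [hp, ENNReal.rpow_natCast]
        _ ≤ (f + g) x ^ p := ENNReal.rpow_le_rpow hle hp0.le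
    calc T ^ (1/p) ≤ (∫⁻ x, (f + g) x ^ p ∂ν) ^ (1/p) :=
          ENNReal.rpow_le_rpow hmono (by positivity)
      _ ≤ (∫⁻ x, f x ^ p ∂ν) ^ (1/p) + (∫⁻ x, g x ^ p ∂ν) ^ (1/p) := hmink
      _ = c + (∫⁻ x, g x ^ p ∂ν) ^ (1/p) := by rw [show (∫⁻ x, f x ^ p ∂ν) = (∫⁻ _ : ℝ, f 0 ^ p ∂ν) from rfl, hconst]
  have hT2 : T ^ (1/p) ≤ D ^ (1/p) * (c + s) := by
    calc T ^ (1/p) ≤ c + D ^ (1/p) * s := hTle.trans (add_le_add_right hR c)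
      _ ≤ D ^ (1/p) * c + D ^ (1/p) * s := by
          gcongr
          calc c = 1 * c := (one_mul c).symm
            _ ≤ D ^ (1/p) * c := by gcongr
      _ = D ^ (1/p) * (c + s) := by rw [mul_add]
  have hfin : T ≤ D * (c + s) ^ p := by
    calc T = (T ^ (1/p)) ^ p := by
          rw [← ENNReal.rpow_mul, one_div_mul_cancel hp0.ne', ENNReal.rpow_one]
      _ ≤ (D ^ (1/p) * (c + s)) ^ p := ENNReal.rpow_le_rpow hT2 hp0.le
      _ = D * (c + s) ^ p := by
          rw [ENNReal.mul_rpow_of_nonneg _ _ hp0.le, ← ENNReal.rpow_mul,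
            one_div_mul_cancel hp0.ne', ENNReal.rpow_one]
  refine hfin.trans_eq ?_
  rw [← ENNReal.ofReal_add (abs_nonneg _) (by positivity), hp, ENNReal.rpow_natCast,
    ← ENNReal.ofReal_pow (by positivity), hDdef, ← ENNReal.ofReal_mul (by positivity),
    add_comm |m| (Real.sqrt 2 * (σ:ℝ))]

/-- If `X ~ N(μ₀, σ²)` and `Y ~ N(ν, τ²)` (not necessarily
independent), and `C := 2·max{(√2·σ + |μ₀|)², (√2·τ + |ν|)²}`, then for every `q ≥ 1`,
`E[(XY - E[XY])^{2q}] ≤ (2q)! · C^{2q}`. -/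
theorem statement16 {Ω : Type*} [MeasurableSpace Ω] (μ : Measure Ω)
    [IsProbabilityMeasure μ]
    (X Y : Ω → ℝ) (hX : Measurable X) (hY : Measurable Y)
    (μ₀ ν : ℝ) (σ τ : ℝ≥0)
    (hlawX : μ.map X = gaussianReal μ₀ (σ ^ 2))
    (hlawY : μ.map Y = gaussianReal ν (τ ^ 2))
    (C : ℝ)
    (hC : C = 2 * max ((Real.sqrt 2 * σ + |μ₀|) ^ 2) ((Real.sqrt 2 * τ + |ν|) ^ 2))
    (q : ℕ) (hq : 1 ≤ q) :
    ∫ ω, (X ω * Y ω - ∫ ω', X ω' * Y ω' ∂μ) ^ (2 * q) ∂μ ≤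
      ((2 * q).factorial : ℝ) * C ^ (2 * q) := by
  have hev : Even (2*q) := ⟨q, by ring⟩
  set f : Ω → ℝ := fun ω ↦ X ω * Y ω with hfdef
  set m : ℝ := ∫ ω', X ω' * Y ω' ∂μ with hm
  set a : ℝ := Real.sqrt 2 * σ + |μ₀| with ha
  set b : ℝ := Real.sqrt 2 * τ + |ν| with hb
  have ha0 : 0 ≤ a := by positivity
  have hb0 : 0 ≤ b := by positivity
  have hC0 : 0 ≤ C := by
    rw [hC]
    have h := le_max_left (a^2) (b^2)
    nlinarith [sq_nonneg a]
  have hfm : Measurable f := hX.mul hY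
  have hRHS0 : (0:ℝ) ≤ ((2*q).factorial : ℝ) * C^(2*q) := by positivity
  -- reduce to lintegral bound
  have hgnn : (0:Ω → ℝ) ≤ᵐ[μ] fun ω ↦ (f ω - m) ^ (2*q) :=
    Filter.Eventually.of_forall fun ω ↦ hev.pow_nonneg _
  rw [integral_eq_lintegral_of_nonneg_ae hgnn
    ((hfm.sub_const m).pow_const _).aestronglyMeasurable]
  suffices key : ∫⁻ ω, ENNReal.ofReal ((f ω - m) ^ (2*q)) ∂μ
      ≤ ENNReal.ofReal (((2*q).factorial : ℝ) * C^(2*q)) by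
    calc (∫⁻ ω, ENNReal.ofReal ((f ω - m) ^ (2*q)) ∂μ).toReal
        ≤ (ENNReal.ofReal (((2*q).factorial : ℝ) * C^(2*q))).toReal :=
          ENNReal.toReal_mono ENNReal.ofReal_ne_top key
      _ = ((2*q).factorial : ℝ) * C^(2*q) := ENNReal.toReal_ofReal hRHS0
  -- setup
  set p : ℝ := ((2*q : ℕ) : ℝ) with hp
  have hp0 : 0 < p := by rw [hp]; exact_mod_cast (by omega : 0 < 2*q)
  have hp1 : 1 ≤ p := by rw [hp]; exact_mod_cast (by omega : 1 ≤ 2*q)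
  have hp1' : 1 < p := by rw [hp]; exact_mod_cast (by omega : 1 < 2*q)
  set A : Ω → ℝ≥0∞ := fun ω ↦ ENNReal.ofReal |f ω| with hA
  have hAm : Measurable A := hfm.abs.ennreal_ofReal
  set c : ℝ≥0∞ := ENNReal.ofReal |m| with hc
  set T : ℝ≥0∞ := ∫⁻ ω, A ω ^ (2*q) ∂μ with hT
  set S : ℝ≥0∞ := ENNReal.ofReal (((2*q).factorial : ℝ) * a^(2*q) * b^(2*q)) with hS
  -- moments of X and Y
  have hXmom : ∫⁻ ω, (ENNReal.ofReal |X ω|) ^ (4*q) ∂μ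
      ≤ ENNReal.ofReal (((2*q).factorial : ℝ) * a ^ (4*q)) := by
    have h := momentAbs4q σ μ₀ q hq
    rw [← hlawX, lintegral_map (f := fun x : ℝ ↦ (ENNReal.ofReal |x|) ^ (4*q))
      ((measurable_abs.ennreal_ofReal).pow_const _) hX] at h
    exact h
  have hYmom : ∫⁻ ω, (ENNReal.ofReal |Y ω|) ^ (4*q) ∂μ
      ≤ ENNReal.ofReal (((2*q).factorial : ℝ) * b ^ (4*q)) := by
    have h := momentAbs4q τ ν q hq
    rw [← hlawY, lintegral_map (f := fun x : ℝ ↦ (ENNReal.ofReal |x|) ^ (4*q))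
      ((measurable_abs.ennreal_ofReal).pow_const _) hY] at h
    exact h
  -- Cauchy-Schwarz
  have hCS : T ≤ S := by
    set U : Ω → ℝ≥0∞ := fun ω ↦ (ENNReal.ofReal |X ω|) ^ (2*q) with hU
    set V : Ω → ℝ≥0∞ := fun ω ↦ (ENNReal.ofReal |Y ω|) ^ (2*q) with hV
    have hUm : AEMeasurable U μ := ((hX.abs.ennreal_ofReal).pow_const _).aemeasurable
    have hVm : AEMeasurable V μ := ((hY.abs.ennreal_ofReal).pow_const _).aemeasurable
    have hTUV : T = ∫⁻ ω, U ω * V ω ∂μ := by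
      rw [hT]
      congr 1; funext ω
      show ENNReal.ofReal |X ω * Y ω| ^ (2*q)
          = ENNReal.ofReal |X ω| ^ (2*q) * ENNReal.ofReal |Y ω| ^ (2*q)
      rw [abs_mul, ENNReal.ofReal_mul (abs_nonneg _), mul_pow]
    have h22 : (2:ℝ).HolderConjugate 2 := Real.holderConjugate_iff.mpr ⟨by norm_num, by norm_num⟩
    have hH := ENNReal.lintegral_mul_le_Lp_mul_Lq μ h22 hUm hVm
    have hU2 : ∀ ω, U ω ^ (2:ℝ) = (ENNReal.ofReal |X ω|) ^ (4*q) := by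
      intro ω
      show ((ENNReal.ofReal |X ω|) ^ (2*q) : ℝ≥0∞) ^ (2:ℝ) = _
      rw [← ENNReal.rpow_natCast _ (2*q), ← ENNReal.rpow_mul,
        show ((2*q : ℕ):ℝ) * 2 = ((4*q : ℕ):ℝ) by push_cast; ring, ENNReal.rpow_natCast]
    have hV2 : ∀ ω, V ω ^ (2:ℝ) = (ENNReal.ofReal |Y ω|) ^ (4*q) := by
      intro ω
      show ((ENNReal.ofReal |Y ω|) ^ (2*q) : ℝ≥0∞) ^ (2:ℝ) = _
      rw [← ENNReal.rpow_natCast _ (2*q), ← ENNReal.rpow_mul,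
        show ((2*q : ℕ):ℝ) * 2 = ((4*q : ℕ):ℝ) by push_cast; ring, ENNReal.rpow_natCast]
    simp_rw [hU2, hV2] at hH
    have hsq : (((2*q).factorial : ℝ) * a ^ (4*q)) * (((2*q).factorial : ℝ) * b ^ (4*q))
        = (((2*q).factorial : ℝ) * a^(2*q) * b^(2*q))^2 := by ring
    calc T = ∫⁻ ω, U ω * V ω ∂μ := hTUV
      _ ≤ (∫⁻ ω, (ENNReal.ofReal |X ω|) ^ (4*q) ∂μ) ^ ((1:ℝ)/2)
          * (∫⁻ ω, (ENNReal.ofReal |Y ω|) ^ (4*q) ∂μ) ^ ((1:ℝ)/2) := hH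
      _ ≤ (ENNReal.ofReal (((2*q).factorial : ℝ) * a ^ (4*q))) ^ ((1:ℝ)/2)
          * (ENNReal.ofReal (((2*q).factorial : ℝ) * b ^ (4*q))) ^ ((1:ℝ)/2) :=
          mul_le_mul' (ENNReal.rpow_le_rpow hXmom (by norm_num))
            (ENNReal.rpow_le_rpow hYmom (by norm_num))
      _ = S := by
          rw [← ENNReal.mul_rpow_of_nonneg _ _ (by norm_num : (0:ℝ) ≤ 1/2),
            ← ENNReal.ofReal_mul (by positivity), hsq,
            ENNReal.ofReal_pow (by positivity), ← ENNReal.rpow_natCast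
              (ENNReal.ofReal (((2*q).factorial : ℝ) * a^(2*q) * b^(2*q))) 2,
            ← ENNReal.rpow_mul, hS]
          norm_num
  have hATp : (∫⁻ ω, A ω ^ p ∂μ) ^ (1/p) = T ^ (1/p) := by
    rw [hT]
    congr 1
    refine lintegral_congr fun ω ↦ ?_
    rw [hp, ENNReal.rpow_natCast]
  -- pointwise bound
  have hpt : ∀ ω, ENNReal.ofReal ((f ω - m) ^ (2*q))
      ≤ (A ω + c) ^ p := by
    intro ω
    have h1 : (f ω - m) ^ (2*q) ≤ (|f ω| + |m|) ^ (2*q) := by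
      calc (f ω - m) ^ (2*q) = |f ω - m| ^ (2*q) := (hev.pow_abs _).symm
        _ ≤ (|f ω| + |m|) ^ (2*q) :=
            pow_le_pow_left₀ (abs_nonneg _) (abs_sub _ _) _
    calc ENNReal.ofReal ((f ω - m) ^ (2*q))
        ≤ ENNReal.ofReal ((|f ω| + |m|) ^ (2*q)) := ENNReal.ofReal_le_ofReal h1
      _ = (A ω + c) ^ (2*q) := by
          rw [hA, hc, ← ENNReal.ofReal_add (abs_nonneg _) (abs_nonneg _),
            ← ENNReal.ofReal_pow (by positivity)]
      _ = (A ω + c) ^ p := by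
          rw [hp, ENNReal.rpow_natCast]
  -- Jensen : c ≤ T ^ (1/p)
  have hcT : c ≤ T ^ (1/p) := by
    have h1 : |m| ≤ ∫ ω, |f ω| ∂μ := by
      rw [hm]
      calc |∫ ω', X ω' * Y ω' ∂μ| = ‖∫ ω', X ω' * Y ω' ∂μ‖ := (Real.norm_eq_abs _).symm
        _ ≤ ∫ ω', ‖X ω' * Y ω'‖ ∂μ := norm_integral_le_integral_norm _
        _ = ∫ ω, |f ω| ∂μ := by simp [hfdef, Real.norm_eq_abs, abs_mul]
    have h2 : ∫ ω, |f ω| ∂μ = (∫⁻ ω, A ω ∂μ).toReal := by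
      rw [integral_eq_lintegral_of_nonneg_ae (Filter.Eventually.of_forall fun ω ↦ abs_nonneg _)
        hfm.abs.aestronglyMeasurable]
    have h3 : c ≤ ∫⁻ ω, A ω ∂μ := by
      calc c ≤ ENNReal.ofReal ((∫⁻ ω, A ω ∂μ).toReal) :=
            ENNReal.ofReal_le_ofReal (h1.trans_eq h2)
        _ ≤ ∫⁻ ω, A ω ∂μ := ENNReal.ofReal_toReal_le
    refine h3.trans ?_
    -- Hölder with 1
    have hpq := Real.HolderConjugate.conjExponent hp1'
    have hH := ENNReal.lintegral_mul_le_Lp_mul_Lq μ hpq hAm.aemeasurable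
      (aemeasurable_const : AEMeasurable (fun _ : Ω ↦ (1:ℝ≥0∞)) μ)
    simp only [mul_one, ENNReal.one_rpow, lintegral_one, measure_univ,
      Pi.mul_apply] at hH
    exact hH.trans_eq hATp
  -- Minkowski with the constant c
  have hmink := ENNReal.lintegral_Lp_add_le (μ := μ) (f := A) (g := fun _ : Ω ↦ c)
    hAm.aemeasurable aemeasurable_const hp1
  simp only [Pi.add_apply] at hmink
  have hconstT : (∫⁻ _ : Ω, c ^ p ∂μ) ^ (1/p) = c := by
    rw [lintegral_const, measure_univ, mul_one, ← ENNReal.rpow_mul,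
      mul_one_div_cancel hp0.ne', ENNReal.rpow_one]
  -- final chain
  calc ∫⁻ ω, ENNReal.ofReal ((f ω - m) ^ (2*q)) ∂μ
      ≤ ∫⁻ ω, (A ω + c) ^ p ∂μ := lintegral_mono hpt
    _ = ((∫⁻ ω, (A ω + c) ^ p ∂μ) ^ (1/p)) ^ p := by
        rw [← ENNReal.rpow_mul, one_div_mul_cancel hp0.ne', ENNReal.rpow_one]
    _ ≤ ((2:ℝ≥0∞) * T ^ (1/p)) ^ p := by
        apply ENNReal.rpow_le_rpow _ hp0.le
        calc (∫⁻ ω, (A ω + c) ^ p ∂μ) ^ (1/p)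
            ≤ (∫⁻ ω, A ω ^ p ∂μ) ^ (1/p) + (∫⁻ _ : Ω, c ^ p ∂μ) ^ (1/p) := hmink
          _ = T ^ (1/p) + c := by rw [hconstT, hATp]
          _ ≤ T ^ (1/p) + T ^ (1/p) := add_le_add_right hcT _
          _ = 2 * T ^ (1/p) := (two_mul _).symm
    _ = (2:ℝ≥0∞) ^ p * T := by
        rw [ENNReal.mul_rpow_of_nonneg _ _ hp0.le, ← ENNReal.rpow_mul,
          one_div_mul_cancel hp0.ne', ENNReal.rpow_one]
    _ ≤ (2:ℝ≥0∞) ^ p * S := by gcongr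
    _ ≤ ENNReal.ofReal (((2*q).factorial : ℝ) * C^(2*q)) := by
        rw [hp, ENNReal.rpow_natCast, show (2:ℝ≥0∞) = ENNReal.ofReal 2 by
          simp, ← ENNReal.ofReal_pow (by norm_num), hS,
          ← ENNReal.ofReal_mul (by positivity)]
        apply ENNReal.ofReal_le_ofReal
        have hab : a * b ≤ max (a^2) (b^2) := by
          rcases le_total a b with h | h
          · calc a * b ≤ b * b := mul_le_mul_of_nonneg_right h hb0
              _ = b^2 := (sq b).symm
              _ ≤ max (a^2) (b^2) := le_max_right _ _
          · calc a * b ≤ a * a := mul_le_mul_of_nonneg_left h ha0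
              _ = a^2 := (sq a).symm
              _ ≤ max (a^2) (b^2) := le_max_left _ _
        have h2ab : (2:ℝ) * (a*b) ≤ C := by
          rw [hC]; nlinarith [hab]
        calc (2:ℝ)^(2*q) * (((2*q).factorial : ℝ) * a^(2*q) * b^(2*q))
            = ((2*q).factorial : ℝ) * (2*(a*b))^(2*q) := by rw [mul_pow, mul_pow]; ring
          _ ≤ ((2*q).factorial : ℝ) * C^(2*q) := by
              apply mul_le_mul_of_nonneg_left _ (by positivity)
              exact pow_le_pow_left₀ (by positivity) h2ab _
end
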